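/- For the cubic Hamiltonian H3 = p1^2 + p2^2 + γ1(q·p) + γ2(q·p)^2 + γ3(q·p)^3 (with q·p = q1 p1 + q2 p2), the function I3 = p2^2 + γ1 q2 p2 + γ2(q1^2+q2^2)p2^2 + γ3(q2^3 p2^3 + (q1^3 + 3 q1 q2^2) p2^2 p1 - q2^3 p2 p1^2) satisfies {H3, I3} = 0. -/

import Mathlib

set_option maxHeartbeats 4000000

open Real

lemma dcm (c x : ℝ) : deriv (HMul.hMul c) x = c := by
  simpa using ((hasDerivAt_id x).const_mul c).deriv

/-- Canonical Poisson bracket on ℝ⁴ with coordinates (q1, q2, p1, p2). -/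
noncomputable def pb (f g : ℝ → ℝ → ℝ → ℝ → ℝ) : ℝ → ℝ → ℝ → ℝ → ℝ :=
  fun q1 q2 p1 p2 =>
      deriv (fun x => f x q2 p1 p2) q1 * deriv (fun x => g q1 q2 x p2) p1
    + deriv (fun x => f q1 x p1 p2) q2 * deriv (fun x => g q1 q2 p1 x) p2
    - deriv (fun x => f q1 q2 x p2) p1 * deriv (fun x => g x q2 p1 p2) q1
    - deriv (fun x => f q1 q2 p1 x) p2 * deriv (fun x => g q1 x p1 p2) q2

theorem cubic_I3_is_constant_of_motion (γ1 γ2 γ3 : ℝ) :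
    pb (fun q1 q2 p1 p2 =>
          p1^2 + p2^2 + γ1*(q1*p1 + q2*p2) + γ2*(q1*p1 + q2*p2)^2 + γ3*(q1*p1 + q2*p2)^3)
       (fun q1 q2 p1 p2 =>
          p2^2 + γ1*q2*p2 + γ2*(q1^2 + q2^2)*p2^2
            + γ3*(q2^3*p2^3 + (q1^3 + 3*q1*q2^2)*p2^2*p1 - q2^3*p2*p1^2)) = 0 := by
  funext q1 q2 p1 p2
  simp only [pb, Pi.zero_apply]
  simp (disch := fun_prop) only [deriv_fun_add, deriv_fun_sub, deriv_fun_mul, deriv_const_mul,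
    deriv_mul_const, deriv_pow_field, deriv_fun_pow, deriv_id'', deriv_const', dcm, deriv_const_add']
  ring
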